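/- A lexicographically minimal spanning tree T of a Cayley graph G (with respect to a fixed linear order on the generators and their inverses) is subperiodic: for every vertex x of T there is an injective graph homomorphism of the subtree T_x of descendants of x into T mapping x to the root, and T has the same growth function as G up to the identity on balls: the ball of radius n in T spans exactly the vertices of the ball of radius n in G. -/

import Mathlib

open List

/-- The Cayley graph of a group with respect to a (symmetric) generating set `S`. -/
def cayley {Γ : Type*} [Group Γ] (S : Finset Γ) : SimpleGraph Γ :=
  SimpleGraph.fromRel fun x y => ∃ s ∈ S, y = x * s

/-- Given a choice `L v` of a word for each group element `v`, the union of the paths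
from the identity spelling these words: `a ~ b` iff they are consecutive partial
products of some word `L v`. -/
def lexTree {Γ : Type*} [Group Γ] (L : Γ → List Γ) : SimpleGraph Γ :=
  SimpleGraph.fromRel fun a b =>
    ∃ (v : Γ) (k : ℕ), k + 1 ≤ (L v).length ∧
      a = ((L v).take k).prod ∧ b = ((L v).take (k + 1)).prod

/-- Descendants of `x` in a tree rooted at `o`: vertices `y` with `x` on the path from
`o` to `y`. -/
def Descendants {V : Type*} (T : SimpleGraph V) (o x : V) : Set V :=
  {y | T.dist o y = T.dist o x + T.dist x y}


/-! ### Longest common prefix length -/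

open scoped Classical in
private noncomputable def lcp {α : Type*} : List α → List α → ℕ
  | a :: l, b :: m => if a = b then lcp l m + 1 else 0
  | _, _ => 0

private lemma lcp_nil {α : Type*} (m : List α) : lcp ([] : List α) m = 0 := by
  cases m <;> simp [lcp]

private lemma lcp_self {α : Type*} (l : List α) : lcp l l = l.length := by
  induction l with
  | nil => simp [lcp]
  | cons a l ih => simp [lcp, ih]

private lemma lcp_le_left {α : Type*} : ∀ (l m : List α), lcp l m ≤ l.length
  | [], m => by simp [lcp_nil]
  | a :: l, [] => by simp [lcp]
  | a :: l, b :: m => by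
      simp only [lcp]
      split
      · simpa using lcp_le_left l m
      · simp

private lemma prefix_of_lcp {α : Type*} : ∀ (l m : List α), lcp l m = l.length → l <+: m
  | [], m, _ => List.nil_prefix
  | a :: l, [], h => by simp [lcp] at h
  | a :: l, b :: m, h => by
      simp only [lcp] at h
      split at h
      · subst ‹a = b›
        simp only [List.length_cons] at h
        obtain ⟨t, ht⟩ := prefix_of_lcp l m (by omega)
        exact ⟨t, by rw [List.cons_append, ht]⟩
      · simp at h

private lemma lcp_append_left_ge {α : Type*} (s : α) :
    ∀ (l m : List α), lcp l m ≤ lcp (l ++ [s]) m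
  | [], m => by simp [lcp_nil]
  | a :: l, [] => by simp [lcp]
  | a :: l, b :: m => by
      simp only [cons_append, lcp]
      split
      · simpa using lcp_append_left_ge s l m
      · simp

private lemma lcp_append_left_le {α : Type*} (s : α) :
    ∀ (l m : List α), lcp (l ++ [s]) m ≤ lcp l m + 1
  | [], [] => by simp [lcp, lcp_nil]
  | [], b :: m => by
      simp only [nil_append, lcp, lcp_nil]
      split <;> simp [lcp_nil]
  | a :: l, [] => by simp [lcp]
  | a :: l, b :: m => by
      simp only [cons_append, lcp]
      split
      · simpa using lcp_append_left_le s l m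
      · simp

/-! ### Lex order lemmas -/

private lemma lex_asymm {α : Type*} {r : α → α → Prop}
    (hr : ∀ a b, r a b → r b a → False) :
    ∀ {l m : List α}, List.Lex r l m → List.Lex r m l → False := by
  intro l m h1
  induction h1 with
  | nil => intro h2; cases h2
  | @cons a l m h ih => intro h2
                        cases h2 with
                        | cons h' => exact ih h'
                        | rel h' => exact hr _ _ h' h'
  | @rel a l b m h => intro h2
                      cases h2 with
                      | cons h' => exact hr _ _ h h
                      | rel h' => exact hr _ _ h h'

private lemma lex_append_right {α : Type*} {r : α → α → Prop} :
    ∀ {l m : List α}, List.Lex r l m → l.length = m.length →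
      ∀ (t u : List α), List.Lex r (l ++ t) (m ++ u) := by
  intro l m h
  induction h with
  | nil => intro hlen; simp at hlen
  | @cons a l m h ih => intro hlen t u
                        exact List.Lex.cons (ih (by simpa using hlen) t u)
  | @rel a l b m h => intro _ t u; exact List.Lex.rel h

private lemma lex_append_left {α : Type*} {r : α → α → Prop} (c : List α) {l m : List α}
    (h : List.Lex r l m) : List.Lex r (c ++ l) (c ++ m) := by
  induction c with
  | nil => simpa using h
  | cons a c ih => exact List.Lex.cons ih

/-! ### Prefixes of lex-minimal geodesic words are lex-minimal geodesic words -/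

section Main

variable {Γ : Type*} [Group Γ] {S : Finset Γ} {ord : Γ → ℕ} {L : Γ → List Γ}

private lemma prefixA
    (hmem : ∀ v : Γ, ∀ s ∈ L v, s ∈ S)
    (hrep : ∀ v : Γ, (L v).prod = v)
    (hgeo : ∀ (v : Γ) (w : List Γ), (∀ s ∈ w, s ∈ S) → w.prod = v →
      (L v).length ≤ w.length)
    (hlex : ∀ (v : Γ) (w : List Γ), (∀ s ∈ w, s ∈ S) → w.prod = v →
      w.length = (L v).length → w ≠ L v →
      List.Lex (fun a b => ord a < ord b) (L v) w)
    (v : Γ) (k : ℕ) (hk : k ≤ (L v).length) :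
    L (((L v).take k).prod) = (L v).take k := by
  set w := (L v).take k with hw
  set u := w.prod with hu
  set d := (L v).drop k with hd
  have hwlen : w.length = k := by simp [hw, hk]
  have hwS : ∀ s ∈ w, s ∈ S := fun s hs => hmem v s (List.take_subset _ _ hs)
  have h1 : (L u).length ≤ k := hwlen ▸ hgeo u w hwS rfl
  have hdS : ∀ s ∈ L u ++ d, s ∈ S := by
    intro s hs
    rcases List.mem_append.mp hs with h | h
    · exact hmem u s h
    · exact hmem v s (List.drop_subset _ _ h)
  have hprod : (L u ++ d).prod = v := by
    rw [List.prod_append, hrep u, hu, ← List.prod_append, hw, hd,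
      List.take_append_drop, hrep v]
  have h2 : (L v).length ≤ (L u).length + d.length := by
    simpa using hgeo v (L u ++ d) hdS hprod
  have hdlen : d.length = (L v).length - k := by simp [hd]
  have h3 : (L u).length = k := by omega
  by_contra hne
  have hne' : L u ≠ w := fun h => hne (h ▸ rfl)
  have hlex1 : List.Lex (fun a b => ord a < ord b) (L u) w :=
    hlex u w hwS rfl (by omega) (fun h => hne' h.symm)
  have hlex2 : List.Lex (fun a b => ord a < ord b) (L u ++ d) (L v) := by
    have := lex_append_right hlex1 (by omega) d d
    rwa [hw, hd, List.take_append_drop] at this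
  have hne2 : L u ++ d ≠ L v := by
    intro h
    apply hne'
    have : L u ++ d = w ++ d := by rw [h, hw, hd, List.take_append_drop]
    exact List.append_cancel_right this
  have hlex3 : List.Lex (fun a b => ord a < ord b) (L v) (L u ++ d) :=
    hlex v (L u ++ d) hdS hprod (by simp; omega) hne2
  exact lex_asymm (fun a b h h' => by omega) hlex2 hlex3

private lemma L_one
    (hmem : ∀ v : Γ, ∀ s ∈ L v, s ∈ S)
    (hrep : ∀ v : Γ, (L v).prod = v)
    (hgeo : ∀ (v : Γ) (w : List Γ), (∀ s ∈ w, s ∈ S) → w.prod = v →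
      (L v).length ≤ w.length)
    (hlex : ∀ (v : Γ) (w : List Γ), (∀ s ∈ w, s ∈ S) → w.prod = v →
      w.length = (L v).length → w ≠ L v →
      List.Lex (fun a b => ord a < ord b) (L v) w) :
    L (1 : Γ) = [] := by
  have := prefixA hmem hrep hgeo hlex (1 : Γ) 0 (Nat.zero_le _)
  simpa using this

private lemma adj_iff
    (hmem : ∀ v : Γ, ∀ s ∈ L v, s ∈ S)
    (hrep : ∀ v : Γ, (L v).prod = v)
    (hgeo : ∀ (v : Γ) (w : List Γ), (∀ s ∈ w, s ∈ S) → w.prod = v →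
      (L v).length ≤ w.length)
    (hlex : ∀ (v : Γ) (w : List Γ), (∀ s ∈ w, s ∈ S) → w.prod = v →
      w.length = (L v).length → w ≠ L v →
      List.Lex (fun a b => ord a < ord b) (L v) w)
    (a b : Γ) :
    (lexTree L).Adj a b ↔ a ≠ b ∧
      ((∃ s, L b = L a ++ [s]) ∨ (∃ s, L a = L b ++ [s])) := by
  have key : ∀ x y : Γ, (∃ (v : Γ) (k : ℕ), k + 1 ≤ (L v).length ∧
      x = ((L v).take k).prod ∧ y = ((L v).take (k + 1)).prod) ↔
      ∃ s, L y = L x ++ [s] := by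
    intro x y
    constructor
    · rintro ⟨v, k, hk, hx, hy⟩
      have hLa : L x = (L v).take k := hx ▸ prefixA hmem hrep hgeo hlex v k (by omega)
      have hLb : L y = (L v).take (k + 1) := hy ▸ prefixA hmem hrep hgeo hlex v (k + 1) hk
      refine ⟨(L v)[k]'(by omega), ?_⟩
      rw [hLa, hLb, ← List.take_concat_get (show k < (L v).length by omega)]
      exact List.concat_eq_append
    · rintro ⟨s, hs⟩
      refine ⟨y, (L x).length, ?_, ?_, ?_⟩
      · rw [hs]; simp
      · rw [hs, List.take_left, hrep x]
      · have : (L y).take ((L x).length + 1) = L y := by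
          apply List.take_of_length_le; rw [hs]; simp
        rw [this, hrep y]
  simp only [lexTree, SimpleGraph.fromRel_adj, key a b, key b a]

private lemma suffix_lemma
    (hmem : ∀ v : Γ, ∀ s ∈ L v, s ∈ S)
    (hrep : ∀ v : Γ, (L v).prod = v)
    (hgeo : ∀ (v : Γ) (w : List Γ), (∀ s ∈ w, s ∈ S) → w.prod = v →
      (L v).length ≤ w.length)
    (hlex : ∀ (v : Γ) (w : List Γ), (∀ s ∈ w, s ∈ S) → w.prod = v →
      w.length = (L v).length → w ≠ L v →
      List.Lex (fun a b => ord a < ord b) (L v) w)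
    (x u : Γ) (h : L x <+: L u) :
    L (x⁻¹ * u) = (L u).drop (L x).length := by
  obtain ⟨t, ht⟩ := h
  have hdrop : (L u).drop (L x).length = t := by rw [← ht, List.drop_left]
  rw [hdrop]
  have htS : ∀ s ∈ t, s ∈ S := fun s hs => hmem u s (by rw [← ht]; exact List.mem_append_right _ hs)
  have htprod : t.prod = x⁻¹ * u := by
    have : (L x).prod * t.prod = u := by rw [← List.prod_append, ht, hrep u]
    rw [hrep x] at this
    rw [← this]; group
  have h1 : (L (x⁻¹ * u)).length ≤ t.length := hgeo _ t htS htprod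
  have hS2 : ∀ s ∈ L x ++ L (x⁻¹ * u), s ∈ S := by
    intro s hs
    rcases List.mem_append.mp hs with h | h
    · exact hmem x s h
    · exact hmem _ s h
  have hprod2 : (L x ++ L (x⁻¹ * u)).prod = u := by
    rw [List.prod_append, hrep x, hrep (x⁻¹ * u)]; group
  have h2 : (L u).length ≤ (L x).length + (L (x⁻¹ * u)).length := by
    simpa using hgeo u _ hS2 hprod2
  have hlent : (L u).length = (L x).length + t.length := by rw [← ht]; simp
  have h3 : (L (x⁻¹ * u)).length = t.length := by omega
  by_contra hne
  have hlex1 : List.Lex (fun a b => ord a < ord b) (L (x⁻¹ * u)) t :=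
    hlex (x⁻¹ * u) t htS htprod (by omega) (fun h => hne h.symm)
  have hlex2 : List.Lex (fun a b => ord a < ord b) (L x ++ L (x⁻¹ * u)) (L u) := by
    have := lex_append_left (L x) hlex1
    rwa [ht] at this
  have hne2 : L x ++ L (x⁻¹ * u) ≠ L u := by
    intro h
    rw [← ht] at h
    exact hne (List.append_cancel_left h) |>.elim
  have hlex3 : List.Lex (fun a b => ord a < ord b) (L u) (L x ++ L (x⁻¹ * u)) :=
    hlex u _ hS2 hprod2 (by simp; omega) hne2
  exact lex_asymm (fun a b h h' => by omega) hlex2 hlex3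

/-! ### Walk length lower bound via potential -/

private lemma walk_lb
    (hmem : ∀ v : Γ, ∀ s ∈ L v, s ∈ S)
    (hrep : ∀ v : Γ, (L v).prod = v)
    (hgeo : ∀ (v : Γ) (w : List Γ), (∀ s ∈ w, s ∈ S) → w.prod = v →
      (L v).length ≤ w.length)
    (hlex : ∀ (v : Γ) (w : List Γ), (∀ s ∈ w, s ∈ S) → w.prod = v →
      w.length = (L v).length → w ≠ L v →
      List.Lex (fun a b => ord a < ord b) (L v) w)
    {x y : Γ} (p : (lexTree L).Walk x y) :
    (L x).length + (L y).length ≤ p.length + 2 * lcp (L x) (L y) := by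
  induction p with
  | nil => simp only [SimpleGraph.Walk.length_nil, lcp_self]; omega
  | @cons x z y h p ih =>
    rw [adj_iff hmem hrep hgeo hlex] at h
    rcases h.2 with ⟨s, hs⟩ | ⟨s, hs⟩
    · -- L z = L x ++ [s]
      rw [hs] at ih
      have h1 := lcp_append_left_le s (L x) (L y)
      simp only [List.length_append, List.length_singleton] at ih
      simp only [SimpleGraph.Walk.length_cons]
      omega
    · -- L x = L z ++ [s]
      have h1 := lcp_append_left_ge s (L z) (L y)
      rw [← hs] at h1
      have h2 : (L x).length = (L z).length + 1 := by rw [hs]; simp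
      simp only [SimpleGraph.Walk.length_cons]
      omega

private lemma exists_walk
    (hmem : ∀ v : Γ, ∀ s ∈ L v, s ∈ S)
    (hrep : ∀ v : Γ, (L v).prod = v)
    (hgeo : ∀ (v : Γ) (w : List Γ), (∀ s ∈ w, s ∈ S) → w.prod = v →
      (L v).length ≤ w.length)
    (hlex : ∀ (v : Γ) (w : List Γ), (∀ s ∈ w, s ∈ S) → w.prod = v →
      w.length = (L v).length → w ≠ L v →
      List.Lex (fun a b => ord a < ord b) (L v) w) :
    ∀ (n : ℕ) (v : Γ), (L v).length ≤ n →
      ∃ p : (lexTree L).Walk 1 v, p.length = (L v).length := by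
  intro n
  induction n with
  | zero =>
    intro v hv
    have hnil : L v = [] := List.length_eq_zero_iff.mp (Nat.le_zero.mp hv)
    have hv1 : v = 1 := by rw [← hrep v, hnil, List.prod_nil]
    subst hv1
    exact ⟨SimpleGraph.Walk.nil, by simp [hnil]⟩
  | succ n ih =>
    intro v hv
    by_cases h0 : (L v).length ≤ n
    · exact ih v h0
    · have hlen : (L v).length = n + 1 := by omega
      have hne : L v ≠ [] := by intro h; rw [h] at hlen; simp at hlen
      set u := ((L v).take n).prod with hu
      have hLu : L u = (L v).take n := prefixA hmem hrep hgeo hlex v n (by omega)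
      have hLulen : (L u).length = n := by rw [hLu]; simp [hlen]
      have hdl : (L v).take n = (L v).dropLast := by
        simp [List.dropLast_eq_take, hlen]
      have hadj : (lexTree L).Adj u v := by
        rw [adj_iff hmem hrep hgeo hlex]
        refine ⟨?_, Or.inl ⟨(L v).getLast hne, ?_⟩⟩
        · intro h
          rw [h] at hLulen
          omega
        · rw [hLu, hdl, List.dropLast_append_getLast hne]
      obtain ⟨p, hp⟩ := ih u (by omega)
      exact ⟨p.concat hadj, by rw [SimpleGraph.Walk.length_concat, hp]; omega⟩

private lemma tdist_eq
    (hmem : ∀ v : Γ, ∀ s ∈ L v, s ∈ S)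
    (hrep : ∀ v : Γ, (L v).prod = v)
    (hgeo : ∀ (v : Γ) (w : List Γ), (∀ s ∈ w, s ∈ S) → w.prod = v →
      (L v).length ≤ w.length)
    (hlex : ∀ (v : Γ) (w : List Γ), (∀ s ∈ w, s ∈ S) → w.prod = v →
      w.length = (L v).length → w ≠ L v →
      List.Lex (fun a b => ord a < ord b) (L v) w)
    (v : Γ) : (lexTree L).dist 1 v = (L v).length := by
  obtain ⟨p, hp⟩ := exists_walk hmem hrep hgeo hlex (L v).length v le_rfl
  refine le_antisymm (hp ▸ SimpleGraph.dist_le p) ?_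
  obtain ⟨q, hq⟩ := p.reachable.exists_walk_length_eq_dist
  have := walk_lb hmem hrep hgeo hlex q
  rw [L_one hmem hrep hgeo hlex, lcp_nil] at this
  simp only [List.length_nil] at this
  omega

private lemma le_cayley
    (hmem : ∀ v : Γ, ∀ s ∈ L v, s ∈ S)
    (hrep : ∀ v : Γ, (L v).prod = v)
    (hgeo : ∀ (v : Γ) (w : List Γ), (∀ s ∈ w, s ∈ S) → w.prod = v →
      (L v).length ≤ w.length)
    (hlex : ∀ (v : Γ) (w : List Γ), (∀ s ∈ w, s ∈ S) → w.prod = v →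
      w.length = (L v).length → w ≠ L v →
      List.Lex (fun a b => ord a < ord b) (L v) w) :
    lexTree L ≤ cayley S := by
  intro a b hab
  rw [adj_iff hmem hrep hgeo hlex] at hab
  rw [cayley, SimpleGraph.fromRel_adj]
  refine ⟨hab.1, ?_⟩
  rcases hab.2 with ⟨s, hs⟩ | ⟨s, hs⟩
  · left
    refine ⟨s, hmem b s (by rw [hs]; exact List.mem_append_right _ (List.mem_singleton_self s)), ?_⟩
    have := hrep b
    rw [hs, List.prod_append, List.prod_singleton, hrep a] at this
    exact this.symm
  · right
    refine ⟨s, hmem a s (by rw [hs]; exact List.mem_append_right _ (List.mem_singleton_self s)), ?_⟩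
    have := hrep a
    rw [hs, List.prod_append, List.prod_singleton, hrep b] at this
    exact this.symm

private lemma cayley_word (hsymm : ∀ s ∈ S, s⁻¹ ∈ S) :
    ∀ {x y : Γ} (p : (cayley S).Walk x y),
      ∃ w : List Γ, (∀ s ∈ w, s ∈ S) ∧ w.prod = x⁻¹ * y ∧ w.length = p.length := by
  intro x y p
  induction p with
  | nil => exact ⟨[], by simp, by simp, by simp⟩
  | @cons x z y h p ih =>
    obtain ⟨w, hwS, hwp, hwl⟩ := ih
    rw [cayley, SimpleGraph.fromRel_adj] at h
    have : ∃ s ∈ S, z = x * s := by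
      rcases h.2 with ⟨s, hsS, hs⟩ | ⟨s, hsS, hs⟩
      · exact ⟨s, hsS, hs⟩
      · exact ⟨s⁻¹, hsymm s hsS, by rw [hs]; group⟩
    obtain ⟨s, hsS, hs⟩ := this
    refine ⟨s :: w, ?_, ?_, by simp [hwl]⟩
    · intro t ht
      rcases List.mem_cons.mp ht with h' | h'
      · rw [h']; exact hsS
      · exact hwS t h'
    · rw [List.prod_cons, hwp, hs]; group

private lemma cdist_eq (hsymm : ∀ s ∈ S, s⁻¹ ∈ S)
    (hmem : ∀ v : Γ, ∀ s ∈ L v, s ∈ S)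
    (hrep : ∀ v : Γ, (L v).prod = v)
    (hgeo : ∀ (v : Γ) (w : List Γ), (∀ s ∈ w, s ∈ S) → w.prod = v →
      (L v).length ≤ w.length)
    (hlex : ∀ (v : Γ) (w : List Γ), (∀ s ∈ w, s ∈ S) → w.prod = v →
      w.length = (L v).length → w ≠ L v →
      List.Lex (fun a b => ord a < ord b) (L v) w)
    (v : Γ) : (cayley S).dist 1 v = (L v).length := by
  obtain ⟨p, hp⟩ := exists_walk hmem hrep hgeo hlex (L v).length v le_rfl
  have hle : (cayley S).dist 1 v ≤ (L v).length := by
    have := SimpleGraph.dist_le (p.mapLe (le_cayley hmem hrep hgeo hlex))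
    rwa [SimpleGraph.Walk.length_map, hp] at this
  refine le_antisymm hle ?_
  obtain ⟨q, hq⟩ := (p.mapLe (le_cayley hmem hrep hgeo hlex)).reachable.exists_walk_length_eq_dist
  obtain ⟨w, hwS, hwp, hwl⟩ := cayley_word hsymm q
  have : (L v).length ≤ w.length := hgeo v w hwS (by rw [hwp]; group)
  omega

private lemma desc_prefix
    (hmem : ∀ v : Γ, ∀ s ∈ L v, s ∈ S)
    (hrep : ∀ v : Γ, (L v).prod = v)
    (hgeo : ∀ (v : Γ) (w : List Γ), (∀ s ∈ w, s ∈ S) → w.prod = v →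
      (L v).length ≤ w.length)
    (hlex : ∀ (v : Γ) (w : List Γ), (∀ s ∈ w, s ∈ S) → w.prod = v →
      w.length = (L v).length → w ≠ L v →
      List.Lex (fun a b => ord a < ord b) (L v) w)
    (x y : Γ) (hy : y ∈ Descendants (lexTree L) 1 x) : L x <+: L y := by
  have hd : (lexTree L).dist 1 y = (lexTree L).dist 1 x + (lexTree L).dist x y := hy
  rw [tdist_eq hmem hrep hgeo hlex, tdist_eq hmem hrep hgeo hlex] at hd
  obtain ⟨px, hpx⟩ := exists_walk hmem hrep hgeo hlex (L x).length x le_rfl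
  obtain ⟨py, hpy⟩ := exists_walk hmem hrep hgeo hlex (L y).length y le_rfl
  have hreach : (lexTree L).Reachable x y := px.reachable.symm.trans py.reachable
  obtain ⟨q, hq⟩ := hreach.exists_walk_length_eq_dist
  have hlb := walk_lb hmem hrep hgeo hlex q
  have h1 := lcp_le_left (L x) (L y)
  have : lcp (L x) (L y) = (L x).length := by omega
  exact prefix_of_lcp _ _ this

end Main

/-- a lexicographically minimal spanning tree `T` of a Cayley graph is
subperiodic, and the ball of radius `n` in `T` consists exactly of the vertices of the
ball of radius `n` in the Cayley graph. -/
theorem stmt15 {Γ : Type*} [Group Γ]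
    (S : Finset Γ) (h1 : (1 : Γ) ∉ S) (hsymm : ∀ s ∈ S, s⁻¹ ∈ S)
    (hgen : Subgroup.closure (S : Set Γ) = ⊤)
    (ord : Γ → ℕ) (hord : Set.InjOn ord (S : Set Γ))  -- the linear order on generators
    (L : Γ → List Γ)
    (hmem : ∀ v : Γ, ∀ s ∈ L v, s ∈ S)
    (hrep : ∀ v : Γ, (L v).prod = v)
    (hgeo : ∀ (v : Γ) (w : List Γ), (∀ s ∈ w, s ∈ S) → w.prod = v →
      (L v).length ≤ w.length)
    (hlex : ∀ (v : Γ) (w : List Γ), (∀ s ∈ w, s ∈ S) → w.prod = v →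
      w.length = (L v).length → w ≠ L v →
      List.Lex (fun a b => ord a < ord b) (L v) w) :
    (∀ x : Γ, ∃ f : Γ → Γ, f x = 1 ∧
      Set.InjOn f (Descendants (lexTree L) 1 x) ∧
      ∀ u ∈ Descendants (lexTree L) 1 x, ∀ v ∈ Descendants (lexTree L) 1 x,
        (lexTree L).Adj u v → (lexTree L).Adj (f u) (f v)) ∧
    (∀ n : ℕ, {v : Γ | (lexTree L).dist 1 v ≤ n} = {v : Γ | (cayley S).dist 1 v ≤ n}) := by
  constructor
  · intro x
    refine ⟨fun u => x⁻¹ * u, by group, ?_, ?_⟩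
    · intro u _ v _ h
      exact mul_left_cancel h
    · intro u hu v hv hadj
      have pu : L x <+: L u := desc_prefix hmem hrep hgeo hlex x u hu
      have pv : L x <+: L v := desc_prefix hmem hrep hgeo hlex x v hv
      have su := suffix_lemma hmem hrep hgeo hlex x u pu
      have sv := suffix_lemma hmem hrep hgeo hlex x v pv
      rw [adj_iff hmem hrep hgeo hlex] at hadj ⊢
      refine ⟨fun h => hadj.1 (mul_left_cancel h), ?_⟩
      rcases hadj.2 with ⟨s, hs⟩ | ⟨s, hs⟩
      · left
        exact ⟨s, by rw [su, sv, hs, List.drop_append_of_le_length pu.length_le]⟩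
      · right
        exact ⟨s, by rw [su, sv, hs, List.drop_append_of_le_length pv.length_le]⟩
  · intro n
    ext v
    simp only [Set.mem_setOf_eq, tdist_eq hmem hrep hgeo hlex,
      cdist_eq hsymm hmem hrep hgeo hlex]
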